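/- Let a, b, c ∈ ℂ and let G(a,b,c) = {(1,0), (a,1), (b,1), (c,1)} ⊆ ℂ². (1) For every Θ ⊆ 𝕋 with exactly two elements: G(a,b,c) fails Θ-PR in ℂ² if and only if a = b = c. (2) For every Θ ⊆ 𝕋 with exactly three elements: G(a,b,c) fails Θ-PR in ℂ² if and only if a = b or b = c or a = c. -/

import Mathlib

open MeasureTheory Set

noncomputable section

/-- The unit circle in the complex plane. -/
def unitCircle : Set ℂ := {z : ℂ | ‖z‖ = 1}

/-- `G` does `Θ`-PR in `H`.  The paper inner product `⟨f,g⟩` (linear in the first argument)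
corresponds to Mathlib's `inner g f` (which is linear in the second argument). -/
def DoesPR {H : Type*} [NormedAddCommGroup H] [InnerProductSpace ℂ H]
    (G : Set H) (Θ : Set ℂ) : Prop :=
  ∀ f h : H, (∀ g ∈ G, ∃ θ ∈ Θ, (inner ℂ g f : ℂ) = θ * (inner ℂ g h : ℂ)) →
    ∃ θ ∈ Θ, f = θ • h

/-- The vector `(x, y)` in `ℂ²`. -/
def vec2 (x y : ℂ) : EuclideanSpace ℂ (Fin 2) := WithLp.toLp 2 ![x, y]

/-- The system `G(a,b,c) = {(1,0), (a,1), (b,1), (c,1)} ⊆ ℂ²`. -/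
def Gabc (a b c : ℂ) : Set (EuclideanSpace ℂ (Fin 2)) :=
  {vec2 1 0, vec2 a 1, vec2 b 1, vec2 c 1}

lemma inner_vec2 (x y : ℂ) (f : EuclideanSpace ℂ (Fin 2)) :
    (inner ℂ (vec2 x y) f : ℂ) = (starRingEnd ℂ) x * f 0 + (starRingEnd ℂ) y * f 1 := by
  simp [vec2, PiLp.inner_apply, RCLike.inner_apply, Fin.sum_univ_two]
  ring

lemma vec2_zero (x y : ℂ) : vec2 x y 0 = x := rfl
lemma vec2_one (x y : ℂ) : vec2 x y 1 = y := rfl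

lemma failA {Θ : Set ℂ} {θ₁ θ₂ : ℂ} (m1 : θ₁ ∈ Θ) (m2 : θ₂ ∈ Θ) (hne : θ₁ ≠ θ₂) (a : ℂ) :
    ¬ DoesPR (Gabc a a a) Θ := by
  intro hPR
  set A := (starRingEnd ℂ) a with hA
  have hcond : ∀ g ∈ Gabc a a a, ∃ θ ∈ Θ,
      (inner ℂ g (vec2 θ₁ (θ₂ - θ₁ * A)) : ℂ) = θ * (inner ℂ g (vec2 1 (1 - A)) : ℂ) := by
    intro g hg
    have hg' : g = vec2 1 0 ∨ g = vec2 a 1 := by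
      simp only [Gabc, Set.mem_insert_iff, Set.mem_singleton_iff] at hg
      tauto
    rcases hg' with rfl | rfl
    · exact ⟨θ₁, m1, by simp [inner_vec2, vec2_zero, vec2_one]⟩
    · exact ⟨θ₂, m2, by simp only [inner_vec2, vec2_zero, vec2_one, map_one, ← hA]; ring⟩
  obtain ⟨θ, hθ, heq⟩ := hPR _ _ hcond
  have h0 := congrArg (fun v => v 0) heq
  have h1 := congrArg (fun v => v 1) heq
  simp only [PiLp.smul_apply, smul_eq_mul, vec2_zero, vec2_one] at h0 h1
  exact hne (by linear_combination (1 - A) * h0 - h1)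

lemma failB {Θ : Set ℂ} {θ₁ θ₂ θ₃ : ℂ} (m1 : θ₁ ∈ Θ) (m2 : θ₂ ∈ Θ) (m3 : θ₃ ∈ Θ)
    (h12 : θ₁ ≠ θ₂) (h13 : θ₁ ≠ θ₃) (h23 : θ₂ ≠ θ₃) {a c : ℂ} (hac : a ≠ c) :
    ¬ DoesPR (Gabc a a c) Θ := by
  intro hPR
  set A := (starRingEnd ℂ) a with hA
  set C := (starRingEnd ℂ) c with hC
  set y : ℂ := (C * (θ₃ - θ₁) - A * (θ₂ - θ₁)) / (θ₂ - θ₃) with hy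
  have hd : θ₂ - θ₃ ≠ 0 := sub_ne_zero.mpr h23
  have hnum : y * (θ₂ - θ₃) = C * (θ₃ - θ₁) - A * (θ₂ - θ₁) := by
    rw [hy]; field_simp
  have hAC : A ≠ C := fun hh => hac ((starRingEnd ℂ).injective hh)
  have hcond : ∀ g ∈ Gabc a a c, ∃ θ ∈ Θ,
      (inner ℂ g (vec2 θ₁ (θ₂ * (A + y) - θ₁ * A)) : ℂ) = θ * (inner ℂ g (vec2 1 y) : ℂ) := by
    intro g hg
    have hg' : g = vec2 1 0 ∨ g = vec2 a 1 ∨ g = vec2 c 1 := by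
      simp only [Gabc, Set.mem_insert_iff, Set.mem_singleton_iff] at hg
      tauto
    rcases hg' with rfl | rfl | rfl
    · exact ⟨θ₁, m1, by simp [inner_vec2, vec2_zero, vec2_one]⟩
    · exact ⟨θ₂, m2, by simp only [inner_vec2, vec2_zero, vec2_one, map_one, ← hA]; ring⟩
    · refine ⟨θ₃, m3, ?_⟩
      simp only [inner_vec2, vec2_zero, vec2_one, ← hA, ← hC, map_one, one_mul]
      rw [hy]
      field_simp
      ring
  obtain ⟨θ, hθ, heq⟩ := hPR _ _ hcond
  · have h0 := congrArg (fun v => v 0) heq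
    have h1 := congrArg (fun v => v 1) heq
    simp only [PiLp.smul_apply, smul_eq_mul, vec2_zero, vec2_one] at h0 h1
    have hθ1 : θ = θ₁ := by rw [h0, mul_one]
    subst hθ1
    have h21 : θ₂ - θ ≠ 0 := sub_ne_zero.mpr (Ne.symm h12)
    have hz : (θ₂ - θ) * (A + y) = 0 := by linear_combination h1
    have hyA : y = -A := by
      rcases mul_eq_zero.mp hz with h | h
      · exact absurd h h21
      · linear_combination h
    rw [hyA] at hnum
    have h31 : θ₃ - θ ≠ 0 := sub_ne_zero.mpr (Ne.symm h13)
    have hz2 : (C - A) * (θ₃ - θ) = 0 := by linear_combination -hnum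
    rcases mul_eq_zero.mp hz2 with h | h
    · exact hAC (by linear_combination -h)
    · exact absurd h h31

lemma eq_smul_of (f h : EuclideanSpace ℂ (Fin 2)) (θ : ℂ)
    (e0 : f 0 = θ * h 0) (e1 : f 1 = θ * h 1) : f = θ • h := by
  ext i
  fin_cases i
  · simpa using e0
  · simpa using e1

/-- If the θ for `(1,0)` matches the θ for some `(x,1)`, phase retrieval succeeds. -/
lemma same_theta {f h : EuclideanSpace ℂ (Fin 2)} {α x : ℂ}
    (e0 : f 0 = α * h 0)
    (ex : (starRingEnd ℂ) x * f 0 + f 1 = α * ((starRingEnd ℂ) x * h 0 + h 1)) :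
    f = α • h :=
  eq_smul_of f h α e0 (by linear_combination ex - (starRingEnd ℂ) x * e0)

/-- If two distinct points `x ≠ y` share a θ = β which differs from the θ = α of `(1,0)`,
phase retrieval also succeeds (forcing `h 0 = 0`). -/
lemma pair_theta {f h : EuclideanSpace ℂ (Fin 2)} {α β x y : ℂ}
    (hxy : x ≠ y) (hαβ : α ≠ β)
    (e0 : f 0 = α * h 0)
    (ex : (starRingEnd ℂ) x * f 0 + f 1 = β * ((starRingEnd ℂ) x * h 0 + h 1))
    (ey : (starRingEnd ℂ) y * f 0 + f 1 = β * ((starRingEnd ℂ) y * h 0 + h 1)) :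
    f = β • h := by
  have hXY : (starRingEnd ℂ) x - (starRingEnd ℂ) y ≠ 0 := by
    intro hh
    exact hxy ((starRingEnd ℂ).injective (by linear_combination hh))
  have hf0 : f 0 = β * h 0 := by
    have : ((starRingEnd ℂ) x - (starRingEnd ℂ) y) * (f 0 - β * h 0) = 0 := by
      linear_combination ex - ey
    rcases mul_eq_zero.mp this with hh | hh
    · exact absurd hh hXY
    · linear_combination hh
  have hh0 : h 0 = 0 := by
    have : (α - β) * h 0 = 0 := by linear_combination hf0 - e0
    rcases mul_eq_zero.mp this with hh | hh
    · exact absurd hh (sub_ne_zero.mpr hαβ)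
    · exact hh
  refine eq_smul_of f h β ?_ ?_
  · rw [hf0]
  · have : f 0 = 0 := by rw [hf0, hh0, mul_zero]
    linear_combination ex - (starRingEnd ℂ) x * this + β * (starRingEnd ℂ) x * hh0

lemma pigeon2 {θ₁ θ₂ α β γ : ℂ} (mα : α = θ₁ ∨ α = θ₂) (mβ : β = θ₁ ∨ β = θ₂)
    (mγ : γ = θ₁ ∨ γ = θ₂) (hαβ : α ≠ β) (hαγ : α ≠ γ) : β = γ := by
  rcases mα with rfl | rfl <;> rcases mβ with rfl | rfl <;> rcases mγ with rfl | rfl <;>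
    simp_all

lemma pigeon3 {θ₁ θ₂ θ₃ α β γ δ : ℂ}
    (mα : α = θ₁ ∨ α = θ₂ ∨ α = θ₃) (mβ : β = θ₁ ∨ β = θ₂ ∨ β = θ₃)
    (mγ : γ = θ₁ ∨ γ = θ₂ ∨ γ = θ₃) (mδ : δ = θ₁ ∨ δ = θ₂ ∨ δ = θ₃)
    (hαβ : α ≠ β) (hαγ : α ≠ γ) (hαδ : α ≠ δ)
    (hβγ : β ≠ γ) (hγδ : γ ≠ δ) (hβδ : β ≠ δ) : False := by
  rcases mα with rfl | rfl | rfl <;> rcases mβ with rfl | rfl | rfl <;>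
    rcases mγ with rfl | rfl | rfl <;> rcases mδ with rfl | rfl | rfl <;> simp_all

lemma mem_G1 (a b c : ℂ) : vec2 1 0 ∈ Gabc a b c := by simp [Gabc]
lemma mem_Ga (a b c : ℂ) : vec2 a 1 ∈ Gabc a b c := by simp [Gabc]
lemma mem_Gb (a b c : ℂ) : vec2 b 1 ∈ Gabc a b c := by simp [Gabc]
lemma mem_Gc (a b c : ℂ) : vec2 c 1 ∈ Gabc a b c := by simp [Gabc]

lemma doesPR_two {Θ : Set ℂ} {θ₁ θ₂ : ℂ} (hΘ : Θ = {θ₁, θ₂}) {a b c : ℂ} (hab : a ≠ b) :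
    DoesPR (Gabc a b c) Θ := by
  intro f h hyp
  obtain ⟨α, mα, e0⟩ := hyp _ (mem_G1 a b c)
  obtain ⟨β, mβ, ea⟩ := hyp _ (mem_Ga a b c)
  obtain ⟨γ, mγ, eb⟩ := hyp _ (mem_Gb a b c)
  rw [inner_vec2, inner_vec2] at e0 ea eb
  simp only [vec2_zero, vec2_one, map_one, map_zero, one_mul, zero_mul, add_zero,
    mul_zero, zero_add] at e0 ea eb
  by_cases hαβ : α = β
  · exact ⟨α, mα, same_theta e0 (hαβ ▸ ea)⟩
  by_cases hαγ : α = γ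
  · exact ⟨α, mα, same_theta e0 (hαγ ▸ eb)⟩
  have hβγ : β = γ := by
    rw [hΘ] at mα mβ mγ
    simp only [Set.mem_insert_iff, Set.mem_singleton_iff] at mα mβ mγ
    exact pigeon2 mα mβ mγ hαβ hαγ
  exact ⟨β, mβ, pair_theta hab hαβ e0 ea (hβγ ▸ eb)⟩

lemma doesPR_three {Θ : Set ℂ} {θ₁ θ₂ θ₃ : ℂ}
    (h12 : θ₁ ≠ θ₂) (h13 : θ₁ ≠ θ₃) (h23 : θ₂ ≠ θ₃)
    (hΘ : Θ = {θ₁, θ₂, θ₃}) {a b c : ℂ}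
    (hab : a ≠ b) (hbc : b ≠ c) (hac : a ≠ c) :
    DoesPR (Gabc a b c) Θ := by
  intro f h hyp
  obtain ⟨α, mα, e0⟩ := hyp _ (mem_G1 a b c)
  obtain ⟨β, mβ, ea⟩ := hyp _ (mem_Ga a b c)
  obtain ⟨γ, mγ, eb⟩ := hyp _ (mem_Gb a b c)
  obtain ⟨δ, mδ, ec⟩ := hyp _ (mem_Gc a b c)
  rw [inner_vec2, inner_vec2] at e0 ea eb ec
  simp only [vec2_zero, vec2_one, map_one, map_zero, one_mul, zero_mul, add_zero,
    mul_zero, zero_add] at e0 ea eb ec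
  by_cases hαβ : α = β
  · exact ⟨α, mα, same_theta e0 (hαβ ▸ ea)⟩
  by_cases hαγ : α = γ
  · exact ⟨α, mα, same_theta e0 (hαγ ▸ eb)⟩
  by_cases hαδ : α = δ
  · exact ⟨α, mα, same_theta e0 (hαδ ▸ ec)⟩
  by_cases hβγ : β = γ
  · exact ⟨β, mβ, pair_theta hab hαβ e0 ea (hβγ ▸ eb)⟩
  by_cases hγδ : γ = δ
  · exact ⟨γ, mγ, pair_theta hbc hαγ e0 eb (hγδ ▸ ec)⟩
  by_cases hβδ : β = δ
  · exact ⟨β, mβ, pair_theta hac hαβ e0 ea (hβδ ▸ ec)⟩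
  exfalso
  rw [hΘ] at mα mβ mγ mδ
  simp only [Set.mem_insert_iff, Set.mem_singleton_iff] at mα mβ mγ mδ
  exact pigeon3 mα mβ mγ mδ hαβ hαγ hαδ hβγ hγδ hβδ

lemma Gabc_swap12 (a b c : ℂ) : Gabc a b c = Gabc b a c := by
  ext g; simp only [Gabc, Set.mem_insert_iff, Set.mem_singleton_iff]; tauto

lemma Gabc_swap23 (a b c : ℂ) : Gabc a b c = Gabc a c b := by
  ext g; simp only [Gabc, Set.mem_insert_iff, Set.mem_singleton_iff]; tauto

theorem stmt17 (a b c : ℂ) :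
    (∀ Θ : Set ℂ, Θ ⊆ unitCircle → (∃ θ₁ θ₂ : ℂ, θ₁ ≠ θ₂ ∧ Θ = {θ₁, θ₂}) →
      (¬ DoesPR (Gabc a b c) Θ ↔ (a = b ∧ b = c))) ∧
    (∀ Θ : Set ℂ, Θ ⊆ unitCircle →
      (∃ θ₁ θ₂ θ₃ : ℂ, θ₁ ≠ θ₂ ∧ θ₁ ≠ θ₃ ∧ θ₂ ≠ θ₃ ∧ Θ = {θ₁, θ₂, θ₃}) →
      (¬ DoesPR (Gabc a b c) Θ ↔ (a = b ∨ b = c ∨ a = c))) := by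
  constructor
  · rintro Θ - ⟨θ₁, θ₂, hne, hΘ⟩
    have m1 : θ₁ ∈ Θ := by rw [hΘ]; simp
    have m2 : θ₂ ∈ Θ := by rw [hΘ]; simp
    constructor
    · intro hfail
      by_contra hcon
      apply hfail
      by_cases hab : a = b
      · have hbc : b ≠ c := fun h => hcon ⟨hab, h⟩
        rw [Gabc_swap12, Gabc_swap23]
        exact doesPR_two hΘ hbc
      · exact doesPR_two hΘ hab
    · rintro ⟨rfl, rfl⟩
      exact failA m1 m2 hne a
  · rintro Θ - ⟨θ₁, θ₂, θ₃, h12, h13, h23, hΘ⟩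
    have m1 : θ₁ ∈ Θ := by rw [hΘ]; simp
    have m2 : θ₂ ∈ Θ := by rw [hΘ]; simp
    have m3 : θ₃ ∈ Θ := by rw [hΘ]; simp
    constructor
    · intro hfail
      by_contra hcon
      push_neg at hcon
      obtain ⟨hab, hbc, hac⟩ := hcon
      exact hfail (doesPR_three h12 h13 h23 hΘ hab hbc hac)
    · rintro (rfl | rfl | rfl)
      · by_cases hac : a = c
        · subst hac; exact failA m1 m2 h12 a
        · exact failB m1 m2 m3 h12 h13 h23 hac
      · rw [Gabc_swap12, Gabc_swap23]
        by_cases hba : b = a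
        · subst hba; exact failA m1 m2 h12 b
        · exact failB m1 m2 m3 h12 h13 h23 hba
      · rw [Gabc_swap23]
        by_cases hab : a = b
        · subst hab; exact failA m1 m2 h12 a
        · exact failB m1 m2 m3 h12 h13 h23 hab
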